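/- Let A be an m×n real matrix with singular values σ_1 ≥ σ_2 ≥ … ≥ σ_r (r = min(m,n)), and for 0 ≤ k < r let A_k = Σ_{j=1}^{k} σ_j u_j v_jᵀ be the truncation of a singular value decomposition of A to its first k terms. Then ‖A − A_k‖_F = (Σ_{j=k+1}^{r} σ_j²)^{1/2} in the Frobenius norm, and for every m×n real matrix B with rank at most k one has ‖A − B‖_F ≥ (Σ_{j=k+1}^{r} σ_j²)^{1/2}; the truncated SVD is a best rank-k approximation in the Frobenius norm. -/

import Mathlib

open Matrix
lemma ortho_of_mul_eq_one {m r : ℕ} (U : Matrix (Fin m) (Fin r) ℝ)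
    (hU : Uᵀ * U = 1) (j j' : Fin r) :
    ∑ i, U i j * U i j' = if j = j' then 1 else 0 := by
  have := congrFun (congrFun hU j) j'
  simpa [Matrix.mul_apply, Matrix.one_apply, Matrix.transpose_apply] using this

/-- If the family `w` is orthonormal, `∑_i (∑_t γ_t w_t(i))² = ∑_t γ_t²`. -/
lemma sum_sq_ortho_fam {m : ℕ} {ι : Type*} [Fintype ι] [DecidableEq ι]
    (w : ι → Fin m → ℝ)
    (hw : ∀ t t', ∑ i, w t i * w t' i = if t = t' then 1 else 0)
    (γ : ι → ℝ) :
    ∑ i, (∑ t, γ t * w t i) ^ 2 = ∑ t, γ t ^ 2 := by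
  calc ∑ i, (∑ t, γ t * w t i) ^ 2
      = ∑ i, ∑ t, ∑ t', (γ t * γ t') * (w t i * w t' i) := by
        refine Finset.sum_congr rfl fun i _ => ?_
        rw [sq, Finset.sum_mul_sum]
        refine Finset.sum_congr rfl fun t _ => Finset.sum_congr rfl fun t' _ => by ring
    _ = ∑ t, ∑ t', (γ t * γ t') * ∑ i, w t i * w t' i := by
        rw [Finset.sum_comm]
        refine Finset.sum_congr rfl fun t _ => ?_
        rw [Finset.sum_comm]
        exact Finset.sum_congr rfl fun t' _ => (Finset.mul_sum _ _ _).symm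
    _ = ∑ t, γ t ^ 2 := by
        refine Finset.sum_congr rfl fun t _ => ?_
        rw [Finset.sum_eq_single t]
        · rw [hw t t]; simp [sq]
        · intro t' _ ht'; rw [hw t t', if_neg (Ne.symm ht'), mul_zero]
        · simp
lemma sum_sq_of_ortho {n r : ℕ} (V : Matrix (Fin n) (Fin r) ℝ) (hV : Vᵀ * V = 1)
    (γ : Fin r → ℝ) :
    ∑ i', (∑ j, γ j * V i' j) ^ 2 = ∑ j, γ j ^ 2 :=
  sum_sq_ortho_fam (fun j i' => V i' j) (ortho_of_mul_eq_one V hV) γ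

lemma frob_sq_combo {m n r : ℕ} (U : Matrix (Fin m) (Fin r) ℝ) (V : Matrix (Fin n) (Fin r) ℝ)
    (hU : Uᵀ * U = 1) (hV : Vᵀ * V = 1) (c : Fin r → ℝ) :
    ∑ i, ∑ i', ((∑ j, c j • Matrix.vecMulVec (fun i => U i j) (fun i' => V i' j)) i i') ^ 2
      = ∑ j, c j ^ 2 := by
  have hentry : ∀ i i', (∑ j, c j • Matrix.vecMulVec (fun i => U i j) (fun i' => V i' j)) i i'
      = ∑ j, (c j * U i j) * V i' j := by
    intro i i'
    simp only [Matrix.sum_apply, Matrix.smul_apply, Matrix.vecMulVec_apply, smul_eq_mul]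
    exact Finset.sum_congr rfl fun j _ => by ring
  calc ∑ i, ∑ i', ((∑ j, c j • Matrix.vecMulVec (fun i => U i j) (fun i' => V i' j)) i i') ^ 2
      = ∑ i, ∑ j, (c j * U i j) ^ 2 := by
        refine Finset.sum_congr rfl fun i _ => ?_
        rw [Finset.sum_congr rfl fun i' (_ : i' ∈ Finset.univ) => congrArg (· ^ 2) (hentry i i')]
        exact sum_sq_of_ortho V hV _
    _ = ∑ j, c j ^ 2 := by
        rw [Finset.sum_comm]
        refine Finset.sum_congr rfl fun j _ => ?_
        rw [Finset.sum_congr rfl fun i (_ : i ∈ Finset.univ) =>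
          (show (c j * U i j) ^ 2 = c j ^ 2 * (U i j * U i j) by ring), ← Finset.mul_sum,
          ortho_of_mul_eq_one U hU j j, if_pos rfl, mul_one]

/-- Least-squares identity. -/
lemma proj_identity {m : ℕ} {ι : Type*} [Fintype ι] [DecidableEq ι] (w : ι → Fin m → ℝ)
    (hw : ∀ t t', ∑ i, w t i * w t' i = if t = t' then 1 else 0)
    (a : Fin m → ℝ) (β : ι → ℝ) :
    ∑ i, (a i - ∑ t, β t * w t i) ^ 2
      = ∑ i, a i ^ 2 - ∑ t, (∑ i, a i * w t i) ^ 2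
        + ∑ t, (β t - ∑ i, a i * w t i) ^ 2 := by
  have h1 : ∑ i, a i * ∑ t, β t * w t i = ∑ t, β t * ∑ i, a i * w t i := by
    rw [Finset.sum_congr rfl fun i (_ : i ∈ Finset.univ) => Finset.mul_sum _ _ (a i),
      Finset.sum_comm]
    refine Finset.sum_congr rfl fun t _ => ?_
    rw [Finset.mul_sum]
    exact Finset.sum_congr rfl fun i _ => by ring
  have h2 := sum_sq_ortho_fam w hw β
  have h3 : ∀ i, (a i - ∑ t, β t * w t i) ^ 2
      = a i ^ 2 - 2 * (a i * ∑ t, β t * w t i) + (∑ t, β t * w t i) ^ 2 := fun i => by ring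
  rw [Finset.sum_congr rfl fun i _ => h3 i, Finset.sum_add_distrib, Finset.sum_sub_distrib,
    ← Finset.mul_sum, h1, h2]
  have h4 : ∀ t, (β t - ∑ i, a i * w t i) ^ 2
      = β t ^ 2 - 2 * (β t * ∑ i, a i * w t i) + (∑ i, a i * w t i) ^ 2 := fun t => by ring
  rw [Finset.sum_congr rfl fun t _ => h4 t, Finset.sum_add_distrib, Finset.sum_sub_distrib,
    ← Finset.mul_sum]
  ring

/-- Bessel's inequality. -/
lemma bessel {m : ℕ} {ι : Type*} [Fintype ι] [DecidableEq ι] (w : ι → Fin m → ℝ)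
    (hw : ∀ t t', ∑ i, w t i * w t' i = if t = t' then 1 else 0)
    (a : Fin m → ℝ) :
    ∑ t, (∑ i, a i * w t i) ^ 2 ≤ ∑ i, a i ^ 2 := by
  have h := proj_identity w hw a (fun t => ∑ i, a i * w t i)
  simp only [sub_self, ne_eq, OfNat.ofNat_ne_zero, not_false_eq_true, zero_pow,
    Finset.sum_const_zero, add_zero] at h
  nlinarith [Finset.sum_nonneg (fun i (_ : i ∈ Finset.univ) =>
    sq_nonneg (a i - ∑ t, (∑ i, a i * w t i) * w t i))]

lemma card_filter_lt {r k : ℕ} (hk : k ≤ r) :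
    (Finset.univ.filter fun j : Fin r => (j : ℕ) < k).card = k := by
  rw [show (Finset.univ.filter fun j : Fin r => (j : ℕ) < k)
      = (Finset.range k).attachFin (fun m hm => lt_of_lt_of_le (Finset.mem_range.mp hm) hk) from ?_,
    Finset.card_attachFin, Finset.card_range]
  ext j
  simp [Finset.mem_attachFin]

lemma weighted_sum_le {r k : ℕ} (hk : k < r) (d c : Fin r → ℝ)
    (hd0 : ∀ j, 0 ≤ d j) (hdec : Antitone d)
    (hc0 : ∀ j, 0 ≤ c j) (hc1 : ∀ j, c j ≤ 1) (hcs : ∑ j, c j ≤ k) :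
    ∑ j, d j * c j ≤ ∑ j ∈ Finset.univ.filter fun j : Fin r => (j : ℕ) < k, d j := by
  set K : Fin r := ⟨k, hk⟩ with hK
  have hsplit : ∑ j, d j * c j
      = ∑ j ∈ Finset.univ.filter (fun j : Fin r => (j : ℕ) < k), d j * c j
        + ∑ j ∈ Finset.univ.filter (fun j : Fin r => ¬ (j : ℕ) < k), d j * c j :=
    (Finset.sum_filter_add_sum_filter_not _ _ _).symm
  have h1 : ∀ j ∈ Finset.univ.filter (fun j : Fin r => (j : ℕ) < k),
      d j * c j - d j ≤ d K * (c j - 1) := by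
    intro j hj
    have hjk : (j : ℕ) < k := (Finset.mem_filter.mp hj).2
    have hdj : d K ≤ d j := hdec (by exact Fin.le_def.mpr (le_of_lt hjk))
    nlinarith [hc1 j]
  have h2 : ∀ j ∈ Finset.univ.filter (fun j : Fin r => ¬ (j : ℕ) < k),
      d j * c j ≤ d K * c j := by
    intro j hj
    have hjk : k ≤ (j : ℕ) := not_lt.mp (Finset.mem_filter.mp hj).2
    have hdj : d j ≤ d K := hdec (Fin.le_def.mpr hjk)
    exact mul_le_mul_of_nonneg_right hdj (hc0 j)
  have key : ∑ j, d j * c j - ∑ j ∈ Finset.univ.filter (fun j : Fin r => (j : ℕ) < k), d j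
      ≤ d K * (∑ j, c j - k) := by
    have e1 : ∑ j ∈ Finset.univ.filter (fun j : Fin r => (j : ℕ) < k), (d j * c j - d j)
        ≤ ∑ j ∈ Finset.univ.filter (fun j : Fin r => (j : ℕ) < k), d K * (c j - 1) :=
      Finset.sum_le_sum h1
    have e2 := Finset.sum_le_sum h2
    have hsum : ∑ j ∈ Finset.univ.filter (fun j : Fin r => (j : ℕ) < k), c j
        + ∑ j ∈ Finset.univ.filter (fun j : Fin r => ¬ (j : ℕ) < k), c j = ∑ j, c j :=
      Finset.sum_filter_add_sum_filter_not _ _ _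
    have l1 : ∑ j ∈ Finset.univ.filter (fun j : Fin r => (j : ℕ) < k), d K * (c j - 1)
        = d K * ∑ j ∈ Finset.univ.filter (fun j : Fin r => (j : ℕ) < k), c j - k * d K := by
      rw [Finset.sum_congr rfl fun j (_ : j ∈ Finset.univ.filter (fun j : Fin r => (j : ℕ) < k))
          => (show d K * (c j - 1) = d K * c j - d K by ring),
        Finset.sum_sub_distrib, Finset.sum_const, card_filter_lt hk.le, ← Finset.mul_sum,
        nsmul_eq_mul]
    have l2 : ∑ j ∈ Finset.univ.filter (fun j : Fin r => ¬ (j : ℕ) < k), d K * c j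
        = d K * ∑ j ∈ Finset.univ.filter (fun j : Fin r => ¬ (j : ℕ) < k), c j :=
      (Finset.mul_sum _ _ _).symm
    have e3 : ∑ j ∈ Finset.univ.filter (fun j : Fin r => (j : ℕ) < k), d K * (c j - 1)
        + ∑ j ∈ Finset.univ.filter (fun j : Fin r => ¬ (j : ℕ) < k), d K * c j
        = d K * (∑ j, c j - k) := by
      rw [l1, l2, ← hsum]; ring
    rw [hsplit, Finset.sum_sub_distrib] at *
    linarith
  have : d K * (∑ j, c j - k) ≤ 0 :=
    mul_nonpos_of_nonneg_of_nonpos (hd0 K) (by linarith)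
  linarith

lemma exists_ortho_decomp {m n k : ℕ} (B : Matrix (Fin m) (Fin n) ℝ) (hB : B.rank ≤ k) :
    ∃ (r' : ℕ) (w : Fin r' → Fin m → ℝ) (β : Fin r' → Fin n → ℝ),
      r' ≤ k ∧ (∀ t t', ∑ i, w t i * w t' i = if t = t' then 1 else 0) ∧
      ∀ i j', B i j' = ∑ t, β t j' * w t i := by
  classical
  set e : (Fin m → ℝ) ≃ₗ[ℝ] EuclideanSpace ℝ (Fin m) :=
    (WithLp.linearEquiv 2 ℝ (Fin m → ℝ)).symm with he
  set S : Submodule ℝ (EuclideanSpace ℝ (Fin m)) :=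
    (LinearMap.range B.mulVecLin).map (e : (Fin m → ℝ) →ₗ[ℝ] EuclideanSpace ℝ (Fin m)) with hS
  have hfr : Module.finrank ℝ S = B.rank := by
    rw [hS, LinearEquiv.finrank_map_eq]; rfl
  have hrk : Module.finrank ℝ S ≤ k := hfr ▸ hB
  let ob := stdOrthonormalBasis ℝ S
  refine ⟨Module.finrank ℝ S, fun t => e.symm (ob t : EuclideanSpace ℝ (Fin m)),
    fun t j' => ob.repr ⟨e (fun i => B i j'), ?_⟩ t, hrk, ?_, ?_⟩
  · refine Submodule.mem_map_of_mem ⟨Pi.single j' 1, ?_⟩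
    ext i
    simp [Matrix.mulVecLin_apply, Matrix.mulVec_single]
  · intro t t'
    have h := orthonormal_iff_ite.mp ob.orthonormal t t'
    rw [Submodule.coe_inner] at h
    simp [PiLp.inner_apply, RCLike.inner_apply, starRingEnd_apply] at h
    rw [← h]
    exact Finset.sum_congr rfl fun x _ => mul_comm _ _
  · intro i j'
    have hmem : e (fun i => B i j') ∈ S := by
      refine Submodule.mem_map_of_mem ⟨Pi.single j' 1, ?_⟩
      ext i
      simp [Matrix.mulVecLin_apply, Matrix.mulVec_single]
    have hx := ob.sum_repr ⟨e (fun i => B i j'), hmem⟩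
    have hx2 : (fun i => B i j')
        = e.symm (∑ t, ob.repr ⟨e (fun i => B i j'), hmem⟩ t • (ob t : EuclideanSpace ℝ (Fin m))) := by
      have := congrArg (fun x : S => e.symm (x : EuclideanSpace ℝ (Fin m))) hx
      simp only at this
      rw [e.symm_apply_apply] at this
      conv_lhs => rw [← this]
      congr 1
      push_cast
      rfl
    have := congrFun hx2 i
    rw [map_sum] at this
    simpa [Finset.sum_apply, Pi.smul_apply, smul_eq_mul, _root_.map_smul] using this


/-- The Frobenius norm of a real matrix. -/
noncomputable def frobNorm {m n : ℕ} (A : Matrix (Fin m) (Fin n) ℝ) : ℝ :=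
  Real.sqrt (∑ i, ∑ j, (A i j) ^ 2)

/-- Eckart–Young in the Frobenius norm: if `A = Σ_j σ_j u_j v_jᵀ` is a singular
value decomposition (with `U`, `V` having orthonormal columns and the `σ_j`
nonnegative and decreasing), and `A_k` is its truncation to the first `k`
terms, then `‖A - A_k‖_F = (Σ_{j>k} σ_j²)^{1/2}`, and every matrix `B` of rank
at most `k` satisfies `‖A - B‖_F ≥ (Σ_{j>k} σ_j²)^{1/2}`. -/
theorem eckart_young_frobenius
    {m n k : ℕ} (A : Matrix (Fin m) (Fin n) ℝ)
    (U : Matrix (Fin m) (Fin (min m n)) ℝ) (V : Matrix (Fin n) (Fin (min m n)) ℝ)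
    (σ : Fin (min m n) → ℝ)
    (hU : Uᵀ * U = 1) (hV : Vᵀ * V = 1)
    (hσ0 : ∀ j, 0 ≤ σ j) (hσdec : Antitone σ)
    (hSVD : A = ∑ j : Fin (min m n),
      σ j • Matrix.vecMulVec (fun i => U i j) (fun i' => V i' j))
    (hk : k < min m n) :
    frobNorm (A - ∑ j : Fin (min m n),
        (if (j : ℕ) < k then σ j else 0) •
          Matrix.vecMulVec (fun i => U i j) (fun i' => V i' j)) =
      Real.sqrt (∑ j ∈ Finset.univ.filter (fun j : Fin (min m n) => k ≤ (j : ℕ)),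
        σ j ^ 2) ∧
    ∀ B : Matrix (Fin m) (Fin n) ℝ, B.rank ≤ k →
      Real.sqrt (∑ j ∈ Finset.univ.filter (fun j : Fin (min m n) => k ≤ (j : ℕ)),
        σ j ^ 2) ≤ frobNorm (A - B) := by
  have hfilter : ∑ j ∈ Finset.univ.filter (fun j : Fin (min m n) => k ≤ (j : ℕ)), σ j ^ 2
      = ∑ j : Fin (min m n), (if k ≤ (j : ℕ) then σ j else 0) ^ 2 := by
    rw [Finset.sum_filter]
    exact Finset.sum_congr rfl fun j _ => by split <;> simp
  constructor
  · -- first part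
    have hdiff : A - ∑ j : Fin (min m n),
        (if (j : ℕ) < k then σ j else 0) •
          Matrix.vecMulVec (fun i => U i j) (fun i' => V i' j)
        = ∑ j : Fin (min m n), (if k ≤ (j : ℕ) then σ j else 0) •
          Matrix.vecMulVec (fun i => U i j) (fun i' => V i' j) := by
      rw [hSVD, ← Finset.sum_sub_distrib]
      refine Finset.sum_congr rfl fun j _ => ?_
      rw [← sub_smul]
      congr 1
      by_cases h : (j : ℕ) < k
      · simp [h, not_le.mpr h]
      · simp [h, not_lt.mp h]
    rw [hfilter, hdiff]
    unfold frobNorm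
    rw [frob_sq_combo U V hU hV]
  · -- second part
    intro B hB
    obtain ⟨r', w, β, hr', hw, hBdef⟩ := exists_ortho_decomp B hB
    set p : Fin (min m n) → Fin r' → ℝ := fun j t => ∑ i, U i j * w t i with hp
    set c : Fin (min m n) → ℝ := fun j => ∑ t, (p j t) ^ 2 with hc
    -- Frobenius square of A - B
    set F : ℝ := ∑ i, ∑ j', ((A - B) i j') ^ 2 with hF
    have step1 : F = ∑ j', ∑ i, (A i j' - ∑ t, β t j' * w t i) ^ 2 := by
      rw [hF, Finset.sum_comm]
      refine Finset.sum_congr rfl fun j' _ => Finset.sum_congr rfl fun i _ => ?_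
      rw [Matrix.sub_apply, hBdef i j']
    have step2 : ∀ j', ∑ i, (A i j')^2 - ∑ t, (∑ i, A i j' * w t i) ^ 2
        ≤ ∑ i, (A i j' - ∑ t, β t j' * w t i) ^ 2 := by
      intro j'
      rw [proj_identity w hw (fun i => A i j') (fun t => β t j')]
      have : (0:ℝ) ≤ ∑ t, (β t j' - ∑ i, A i j' * w t i) ^ 2 :=
        Finset.sum_nonneg fun t _ => sq_nonneg _
      linarith
    have step3 : ∑ j', ∑ i, (A i j') ^ 2 = ∑ j, σ j ^ 2 := by
      rw [Finset.sum_comm]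
      have := frob_sq_combo U V hU hV σ
      rw [← this, ← hSVD]
    have step4 : ∀ t, ∑ j', (∑ i, A i j' * w t i) ^ 2 = ∑ j, (σ j * p j t) ^ 2 := by
      intro t
      have hAw : ∀ j', ∑ i, A i j' * w t i = ∑ j, (σ j * p j t) * V j' j := by
        intro j'
        rw [hSVD]
        have hentry : ∀ i, (∑ j : Fin (min m n),
            σ j • Matrix.vecMulVec (fun i => U i j) (fun i' => V i' j)) i j'
            = ∑ j, σ j * U i j * V j' j := by
          intro i
          simp only [Matrix.sum_apply, Matrix.smul_apply, Matrix.vecMulVec_apply, smul_eq_mul]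
          exact Finset.sum_congr rfl fun j _ => by ring
        rw [Finset.sum_congr rfl fun i (_ : i ∈ Finset.univ) =>
          congrArg (· * w t i) (hentry i)]
        simp only [Finset.sum_mul]
        rw [Finset.sum_comm]
        refine Finset.sum_congr rfl fun j _ => ?_
        rw [hp]
        simp only [Finset.mul_sum, Finset.sum_mul]
        exact Finset.sum_congr rfl fun i _ => by ring
      rw [Finset.sum_congr rfl fun j' (_ : j' ∈ Finset.univ) =>
        congrArg (· ^ 2) (hAw j')]
      exact sum_sq_of_ortho V hV _
    have step5 : ∑ t, ∑ j, (σ j * p j t) ^ 2 = ∑ j, σ j ^ 2 * c j := by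
      rw [Finset.sum_comm]
      refine Finset.sum_congr rfl fun j _ => ?_
      rw [hc]
      simp only [Finset.mul_sum]
      exact Finset.sum_congr rfl fun t _ => by ring
    have hUdiag : ∀ j, ∑ i, (U i j) ^ 2 = 1 := by
      intro j
      have := ortho_of_mul_eq_one U hU j j
      rw [if_pos rfl] at this
      rw [← this]
      exact Finset.sum_congr rfl fun i _ => sq (U i j)
    have step6 : ∀ j, c j ≤ 1 := by
      intro j
      have := bessel w hw (fun i => U i j)
      rw [hUdiag j] at this
      exact this
    have step7 : ∑ j, c j ≤ (k : ℝ) := by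
      have : ∑ j, c j = ∑ t, ∑ j, (p j t) ^ 2 := by
        rw [Finset.sum_comm]
      rw [this]
      have hbd : ∀ t, ∑ j, (p j t) ^ 2 ≤ 1 := by
        intro t
        have hb := bessel (fun j (i : Fin m) => U i j) (ortho_of_mul_eq_one U hU) (w t)
        have hwt : ∑ i, (w t i) ^ 2 = 1 := by
          have := hw t t
          rw [if_pos rfl] at this
          rw [← this]
          exact Finset.sum_congr rfl fun i _ => sq (w t i)
        rw [hwt] at hb
        refine le_trans (le_of_eq ?_) hb
        refine Finset.sum_congr rfl fun j _ => ?_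
        rw [hp]
        congr 1
        exact Finset.sum_congr rfl fun i _ => mul_comm _ _
      calc ∑ t, ∑ j, (p j t) ^ 2 ≤ ∑ t : Fin r', (1:ℝ) := Finset.sum_le_sum fun t _ => hbd t
        _ = (r' : ℝ) := by simp
        _ ≤ (k : ℝ) := by exact_mod_cast hr'
    have step8 : ∑ j, σ j ^ 2 * c j
        ≤ ∑ j ∈ Finset.univ.filter (fun j : Fin (min m n) => (j : ℕ) < k), σ j ^ 2 := by
      refine weighted_sum_le hk (fun j => σ j ^ 2) c (fun j => sq_nonneg _) ?_
        (fun j => Finset.sum_nonneg fun t _ => sq_nonneg _) step6 step7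
      intro a b hab
      exact pow_le_pow_left₀ (hσ0 b) (hσdec hab) 2
    have hsplit : ∑ j ∈ Finset.univ.filter (fun j : Fin (min m n) => (j : ℕ) < k), σ j ^ 2
        + ∑ j ∈ Finset.univ.filter (fun j : Fin (min m n) => k ≤ (j : ℕ)), σ j ^ 2
        = ∑ j, σ j ^ 2 := by
      rw [show (Finset.univ.filter (fun j : Fin (min m n) => k ≤ (j : ℕ)))
          = (Finset.univ.filter (fun j : Fin (min m n) => ¬ (j : ℕ) < k)) from by
        ext j; simp [not_lt]]
      exact Finset.sum_filter_add_sum_filter_not _ _ _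
    -- combine
    have hsum2 : ∑ j', (∑ i, (A i j')^2 - ∑ t, (∑ i, A i j' * w t i) ^ 2) ≤ F := by
      rw [step1]
      exact Finset.sum_le_sum fun j' _ => step2 j'
    have hsum3 : ∑ j', (∑ i, (A i j')^2 - ∑ t, (∑ i, A i j' * w t i) ^ 2)
        = ∑ j, σ j ^ 2 - ∑ j, σ j ^ 2 * c j := by
      rw [Finset.sum_sub_distrib, step3, Finset.sum_comm]
      congr 1
      rw [Finset.sum_congr rfl fun t (_ : t ∈ Finset.univ) => step4 t, step5]
    have hge : ∑ j ∈ Finset.univ.filter (fun j : Fin (min m n) => k ≤ (j : ℕ)), σ j ^ 2 ≤ F := by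
      rw [hsum3] at hsum2
      linarith
    unfold frobNorm
    exact Real.sqrt_le_sqrt hge
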